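/- Let ψ(y) = ψ_r(‖y − y_opt‖) be radially symmetric around y_opt, differentiable, and in S(m_ψ, L_ψ). Let z minimize f(y) = ½(y−r)ᵀ(𝓛⊗I_d)(y−r) + Σ_{i∈𝓥_l} ψ(y_i) with 𝓛 a graph Laplacian and connectivity assumption in force. Then y_opt lies in the convex hull of the points {z_i : i ∈ 𝓥_l}. -/

import Mathlib

open Matrix
open scoped Kronecker

def memS {E : Type*} [NormedAddCommGroup E] [InnerProductSpace ℝ E] [CompleteSpace E]
    (m L : ℝ) (f : E → ℝ) : Prop :=
  ContDiff ℝ 1 f ∧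
    ∀ y₁ y₂ : E,
      m * ‖y₁ - y₂‖ ^ 2 ≤ (inner ℝ (gradient f y₁ - gradient f y₂) (y₁ - y₂) : ℝ) ∧
      (inner ℝ (gradient f y₁ - gradient f y₂) (y₁ - y₂) : ℝ) ≤ L * ‖y₁ - y₂‖ ^ 2

noncomputable def bigf {N d : ℕ} (𝓛 : Matrix (Fin N) (Fin N) ℝ)
    (r : EuclideanSpace ℝ (Fin N × Fin d)) (Vl : Finset (Fin N))
    (ψ : EuclideanSpace ℝ (Fin d) → ℝ) (y : EuclideanSpace ℝ (Fin N × Fin d)) : ℝ :=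
  (1 / 2) * ((fun p => y p - r p) ⬝ᵥ
      (𝓛 ⊗ₖ (1 : Matrix (Fin d) (Fin d) ℝ)).mulVec (fun p => y p - r p))
    + ∑ i ∈ Vl, ψ (WithLp.toLp 2 (fun j => y (i, j)))

/-- for radially symmetric `ψ(y) = ψ_r(‖y − y_opt‖) ∈ S(m_ψ,L_ψ)`, the
source `y_opt` lies in the convex hull of the informed agents' positions at the
minimizer `z` of `f`. -/
theorem stmt10 {N d : ℕ} [NeZero N] [NeZero d]
    (G : SimpleGraph (Fin N)) [DecidableRel G.Adj]
    (Vl : Finset (Fin N)) (hVl : Vl.Nonempty)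
    (hconn : ∀ v : Fin N, ∃ w ∈ Vl, G.Reachable v w)
    (mψ Lψ : ℝ) (hmψ : 0 < mψ) (hmLψ : mψ ≤ Lψ)
    (ψ : EuclideanSpace ℝ (Fin d) → ℝ) (hψ : memS mψ Lψ ψ)
    (yopt : EuclideanSpace ℝ (Fin d)) (ψr : ℝ → ℝ)
    (hrad : ∀ y : EuclideanSpace ℝ (Fin d), ψ y = ψr ‖y - yopt‖)
    (r : EuclideanSpace ℝ (Fin N × Fin d))
    (z : EuclideanSpace ℝ (Fin N × Fin d))
    (hz : ∀ y, bigf (G.lapMatrix ℝ) r Vl ψ z ≤ bigf (G.lapMatrix ℝ) r Vl ψ y) :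
    yopt ∈ convexHull ℝ
      ((fun i => (show EuclideanSpace ℝ (Fin d) from WithLp.toLp 2 (fun j => z (i, j)))) '' (Vl : Set (Fin N))) := by
  classical
  have hdiff : Differentiable ℝ ψ := hψ.1.differentiable one_ne_zero
  set M : Matrix (Fin N × Fin d) (Fin N × Fin d) ℝ :=
    (G.lapMatrix ℝ) ⊗ₖ (1 : Matrix (Fin d) (Fin d) ℝ) with hM
  set zi : Fin N → EuclideanSpace ℝ (Fin d) :=
    fun i => (show EuclideanSpace ℝ (Fin d) from WithLp.toLp 2 (fun j => z (i, j))) with hzidef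
  -- derivative of ψ along a line
  have key : ∀ (a b : EuclideanSpace ℝ (Fin d)),
      HasDerivAt (fun t : ℝ => ψ (a + t • b)) (inner ℝ (gradient ψ a) b : ℝ) 0 := by
    intro a b
    have line : HasDerivAt (fun t : ℝ => a + t • b) b 0 := by
      simpa using ((hasDerivAt_id (0 : ℝ)).smul_const b).const_add a
    have hf : HasFDerivAt ψ (InnerProductSpace.toDual ℝ _ (gradient ψ a)) a :=
      (hdiff a).hasGradientAt.hasFDerivAt
    have h0 : a + (0 : ℝ) • b = a := by simp
    have := (h0.symm ▸ hf).comp_hasDerivAt 0 line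
    simpa [InnerProductSpace.toDual_apply_apply, Function.comp_def] using this
  -- gradient is orthogonal to directions orthogonal to y - yopt
  have horth : ∀ (y w : EuclideanSpace ℝ (Fin d)), (inner ℝ (y - yopt) w : ℝ) = 0 →
      (inner ℝ (gradient ψ y) w : ℝ) = 0 := by
    intro y w hor
    set h : ℝ → ℝ := fun t => ψ (y + t • w) with hh
    have heven : ∀ t : ℝ, h (-t) = h t := by
      intro t
      have hnorm : ‖y + (-t) • w - yopt‖ = ‖y + t • w - yopt‖ := by
        have e1 : y + (-t) • w - yopt = (y - yopt) + (-t) • w := by abel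
        have e2 : y + t • w - yopt = (y - yopt) + t • w := by abel
        rw [e1, e2, ← Real.sqrt_sq (norm_nonneg _),
          ← Real.sqrt_sq (norm_nonneg ((y - yopt) + t • w))]
        congr 1
        rw [norm_add_sq_real, norm_add_sq_real, real_inner_smul_right, real_inner_smul_right, hor,
          norm_smul, norm_smul]
        simp [mul_pow, sq_abs]
      simp only [hh, hrad, hnorm]
    have hD : HasDerivAt h (inner ℝ (gradient ψ y) w : ℝ) 0 := key y w
    have hDneg : HasDerivAt (fun t : ℝ => h (-t)) (-(inner ℝ (gradient ψ y) w : ℝ)) 0 := by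
      have hD' : HasDerivAt h (inner ℝ (gradient ψ y) w : ℝ) (-0 : ℝ) := by simpa using hD
      have := hD'.comp (0 : ℝ) (hasDerivAt_neg (0 : ℝ))
      simpa [Function.comp_def] using this
    have hfe : (fun t : ℝ => h (-t)) = h := funext heven
    rw [hfe] at hDneg
    have := hD.unique hDneg
    linarith
  -- gradient vanishes at yopt
  have hgopt : gradient ψ yopt = 0 := by
    have h0 : ∀ w : EuclideanSpace ℝ (Fin d), (inner ℝ (gradient ψ yopt) w : ℝ) = 0 := by
      intro w
      exact horth yopt w (by simp)
    exact inner_self_eq_zero.mp (h0 (gradient ψ yopt))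
  -- gradient lies in span of y - yopt
  have hspan : ∀ y : EuclideanSpace ℝ (Fin d), ∃ c : ℝ, gradient ψ y = c • (y - yopt) := by
    intro y
    have hmem : gradient ψ y ∈ ((ℝ ∙ (y - yopt))ᗮ)ᗮ := by
      rw [Submodule.mem_orthogonal]
      intro u hu
      have hvu : (inner ℝ (y - yopt) u : ℝ) = 0 := hu _ (Submodule.mem_span_singleton_self _)
      rw [real_inner_comm]
      exact horth y u hvu
    rw [Submodule.orthogonal_orthogonal] at hmem
    obtain ⟨c, hc⟩ := Submodule.mem_span_singleton.mp hmem
    exact ⟨c, hc.symm⟩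
  -- matrix facts
  have hrowsum : ∀ i, ∑ k, G.lapMatrix ℝ i k = 0 := by
    intro i
    have := congrFun (G.lapMatrix_mulVec_const_eq_zero (R := ℝ)) i
    simpa [Matrix.mulVec, dotProduct] using this
  have hMu : ∀ w : Fin d → ℝ, M.mulVec (fun p => w p.2) = 0 := by
    intro w
    funext p
    simp only [hM, Matrix.mulVec, dotProduct, Fintype.sum_prod_type,
      Matrix.kroneckerMap_apply, Matrix.one_apply, mul_ite, mul_one, mul_zero, ite_mul, zero_mul,
      Finset.sum_ite_eq, Finset.mem_univ, if_true]
    simp only [← Finset.sum_mul, hrowsum, zero_mul, Pi.zero_apply]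
  have hdotu : ∀ (w : Fin d → ℝ) (x : Fin N × Fin d → ℝ),
      (fun p : Fin N × Fin d => w p.2) ⬝ᵥ M.mulVec x = 0 := by
    intro w x
    have hcol : ∀ k, ∑ i, G.lapMatrix ℝ i k = 0 := by
      intro k
      have hs := G.isSymm_lapMatrix (R := ℝ)
      calc ∑ i, G.lapMatrix ℝ i k = ∑ i, G.lapMatrix ℝ k i :=
            Finset.sum_congr rfl fun i _ => hs.apply k i
        _ = 0 := hrowsum k
    rw [Matrix.dotProduct_mulVec]
    have hvm : Matrix.vecMul (fun p : Fin N × Fin d => w p.2) M = 0 := by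
      funext q
      simp only [hM, Matrix.vecMul, dotProduct, Fintype.sum_prod_type,
        Matrix.kroneckerMap_apply, Matrix.one_apply, mul_ite, mul_one, mul_zero, ite_mul, zero_mul,
        Finset.sum_ite_eq, Finset.sum_ite_eq', Finset.mem_univ, if_true]
      simp only [mul_comm (w q.2), ← Finset.sum_mul, hcol, zero_mul, Pi.zero_apply]
    rw [hvm, zero_dotProduct]
  -- the sum of gradients at the minimizer vanishes
  have hgradsum : ∑ i ∈ Vl, gradient ψ (zi i) = 0 := by
    have hw : ∀ w : EuclideanSpace ℝ (Fin d),
        ∑ i ∈ Vl, (inner ℝ (gradient ψ (zi i)) w : ℝ) = 0 := by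
      intro w
      set u : EuclideanSpace ℝ (Fin N × Fin d) :=
        (show EuclideanSpace ℝ (Fin N × Fin d) from WithLp.toLp 2 (fun p => w p.2)) with hu
      set h : ℝ → ℝ := fun t => ∑ i ∈ Vl, ψ (zi i + t • w) with hh
      set Q : ℝ := (1 / 2) * ((fun p => z p - r p) ⬝ᵥ M.mulVec (fun p => z p - r p)) with hQ
      have eq1 : ∀ t : ℝ, bigf (G.lapMatrix ℝ) r Vl ψ (z + t • u) = Q + h t := by
        intro t
        have ha : (fun p => (z + t • u) p - r p)
            = (fun p => z p - r p) + t • (fun p : Fin N × Fin d => w p.2) := by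
          funext p
          simp only [hu, PiLp.add_apply, PiLp.smul_apply, Pi.add_apply, Pi.smul_apply,
            smul_eq_mul]
          ring
        have hquad : (fun p => (z + t • u) p - r p) ⬝ᵥ M.mulVec (fun p => (z + t • u) p - r p)
            = (fun p => z p - r p) ⬝ᵥ M.mulVec (fun p => z p - r p) := by
          rw [ha, Matrix.mulVec_add, Matrix.mulVec_smul, hMu w, smul_zero, add_zero,
            add_dotProduct, smul_dotProduct, hdotu w _, smul_zero, add_zero]
        show (1 / 2) * ((fun p => (z + t • u) p - r p) ⬝ᵥ
            M.mulVec (fun p => (z + t • u) p - r p))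
          + ∑ i ∈ Vl, ψ (WithLp.toLp 2 (fun j => (z + t • u) (i, j))) = Q + h t
        rw [hquad]
        first
        | rfl
        | · rw [← hQ]
            congr 1
            refine Finset.sum_congr rfl fun i _ => ?_
            congr 1
            funext j
            simp [hu, hzidef]
      have eq0 : bigf (G.lapMatrix ℝ) r Vl ψ z = Q + h 0 := by
        have hz0 : z + (0 : ℝ) • u = z := by simp
        have := eq1 0
        rwa [hz0] at this
      have hmin : ∀ t : ℝ, h 0 ≤ h t := by
        intro t
        have h1 := hz (z + t • u)
        rw [eq1 t, eq0] at h1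
        linarith
      have hloc : IsLocalMin h 0 := Filter.Eventually.of_forall hmin
      have hder : HasDerivAt h (∑ i ∈ Vl, (inner ℝ (gradient ψ (zi i)) w : ℝ)) 0 :=
        HasDerivAt.fun_sum fun i _ => key (zi i) w
      have := hloc.deriv_eq_zero
      rwa [hder.deriv] at this
    have := hw (∑ i ∈ Vl, gradient ψ (zi i))
    rw [← sum_inner] at this
    exact inner_self_eq_zero.mp this
  -- conclusion
  by_cases hcase : ∃ i ∈ Vl, zi i = yopt
  · obtain ⟨i, hi, hie⟩ := hcase
    exact subset_convexHull ℝ _ ⟨i, hi, hie⟩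
  · push_neg at hcase
    choose c hc using fun i => hspan (zi i)
    have hcge : ∀ i ∈ Vl, mψ ≤ c i := by
      intro i hi
      have hne : zi i - yopt ≠ 0 := sub_ne_zero.mpr (hcase i hi)
      have hbound := (hψ.2 (zi i) yopt).1
      rw [hgopt, sub_zero, hc i, real_inner_smul_left, real_inner_self_eq_norm_sq] at hbound
      have hpos : 0 < ‖zi i - yopt‖ ^ 2 := pow_pos (norm_pos_iff.mpr hne) 2
      nlinarith
    have hspos : (0 : ℝ) < ∑ i ∈ Vl, c i :=
      Finset.sum_pos (fun i hi => lt_of_lt_of_le hmψ (hcge i hi)) hVl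
    have hcm : ∑ i ∈ Vl, c i • (zi i - yopt) = 0 := by
      calc ∑ i ∈ Vl, c i • (zi i - yopt) = ∑ i ∈ Vl, gradient ψ (zi i) :=
            Finset.sum_congr rfl fun i _ => (hc i).symm
        _ = 0 := hgradsum
    have hmean : ∑ i ∈ Vl, c i • zi i = (∑ i ∈ Vl, c i) • yopt := by
      have hsub : ∑ i ∈ Vl, (c i • zi i - c i • yopt) = 0 := by
        simpa [smul_sub] using hcm
      rw [Finset.sum_sub_distrib, sub_eq_zero] at hsub
      rw [hsub, ← Finset.sum_smul]
    have hmem := Finset.centerMass_mem_convexHull Vl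
      (fun i hi => le_of_lt (lt_of_lt_of_le hmψ (hcge i hi))) hspos
      (z := zi) (fun i hi => Set.mem_image_of_mem _ hi)
    have hcm2 : Vl.centerMass c zi = yopt := by
      rw [Finset.centerMass, hmean, smul_smul, inv_mul_cancel₀ (ne_of_gt hspos), one_smul]
    rwa [hcm2] at hmem
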